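/- arXiv:1706.03035 — 2 statements merged into one kernel-verified Lean document; each statement's English description precedes it below -/
import Mathlib

section
/- For any integer j with 1 ≤ j, the xorshift operation xs_{w,j}(x) = x XOR (2^j · x mod 2^w), restricted to [0..2^w − 1], satisfies xs_{w,j}(xs_{w,j}(x)) = x whenever 2j ≥ w, i.e., the function is an involution (self-inverse) on [0..2^w − 1]. -/
/-- The xorshift operation `xs_{w,j}(x) = (x XOR (2^j·x mod 2^w)) mod 2^w` is an
involution on `[0..2^w - 1]` when `⌊w/2⌋ < j < w` (so that `2j ≥ w`). -/
theorem xorshift_involution (w j : ℕ) (hj1 : w / 2 < j) (hj2 : j < w)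
    (x : ℕ) (hx : x < 2 ^ w) :
    (((x ^^^ (2 ^ j * x % 2 ^ w)) % 2 ^ w) ^^^
      (2 ^ j * ((x ^^^ (2 ^ j * x % 2 ^ w)) % 2 ^ w) % 2 ^ w)) % 2 ^ w = x := by
  have hsh : ∀ a : ℕ, 2 ^ j * a = a <<< j := fun a => by
    rw [Nat.shiftLeft_eq, mul_comm]
  have hxb : ∀ k, w ≤ k → x.testBit k = false := fun k hk =>
    Nat.testBit_eq_false_of_lt (lt_of_lt_of_le hx (Nat.pow_le_pow_right (by norm_num) hk))
  apply Nat.eq_of_testBit_eq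
  intro i
  simp only [hsh, Nat.testBit_mod_two_pow, Nat.testBit_xor, Nat.testBit_shiftLeft, ge_iff_le]
  by_cases hi : i < w
  · by_cases hji : j ≤ i
    · have h1 : ¬ j ≤ i - j := by omega
      have h2 : i - j < w := by omega
      simp [hi, hji, h1, h2]
    · simp [hi, hji]
  · simp [hi, hxb i (le_of_not_gt hi)]
end

section
/- If a string T of length n over an alphabet of size σ ≥ 2 has LZ78 factorization with z factors, and z' factors covering the first n − r characters have already been produced, then the number of remaining factors satisfies z − z' ≤ c·r/log_σ r for an absolute constant c > 0 (for r ≥ σ). -/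
/-- `F` is an LZ78 factorization of `T`: the factors concatenate to `T`, and each
factor extends the longest previously seen factor (or the empty string) that is a
prefix of the remaining suffix by one character.  The last factor is allowed to be
exactly a previous factor (no extending character). -/
def IsLZ78 {α : Type*} (T : List α) (F : List (List α)) : Prop :=
  F.flatten = T ∧
  ∀ i (hi : i < F.length),
    ∃ prev ∈ ([] :: F.take i),
      ((∃ c : α, F.get ⟨i, hi⟩ = prev ++ [c]) ∨
        (i = F.length - 1 ∧ prev ≠ [] ∧ F.get ⟨i, hi⟩ = prev)) ∧
      ∀ S ∈ ([] :: F.take i), S <+: (F.drop i).flatten → S.length ≤ prev.length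

/-- Key distinctness property: any factor other than the last differs from all
earlier factors. -/
lemma lz_key {α : Type*} {T : List α} {F : List (List α)} (h : IsLZ78 T F)
    {i j : ℕ} (hij : i < j) (hj1 : j + 1 < F.length) :
    F[j]'(by omega) ≠ F[i]'(by omega) := by
  intro heq
  obtain ⟨prev, hprevmem, hcase, hmax⟩ := h.2 j (by omega)
  have hc : ∃ c : α, F[j]'(by omega) = prev ++ [c] := by
    rcases hcase with hc | ⟨hj', _, _⟩
    · simpa [List.get_eq_getElem] using hc
    · omega
  obtain ⟨c, hc⟩ := hc
  have hmemtake : F[i]'(by omega) ∈ F.take j := by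
    have h1 : i < (F.take j).length := by simp; omega
    have := List.getElem_mem h1
    rwa [List.getElem_take] at this
  have hpre : F[i]'(by omega) <+: (F.drop j).flatten := by
    rw [← heq, List.drop_eq_getElem_cons (by omega : j < F.length), List.flatten_cons]
    exact List.prefix_append _ _
  have := hmax _ (List.mem_cons_of_mem _ hmemtake) hpre
  rw [← heq, hc] at this
  simp at this

/-- All LZ78 factors except possibly the last are pairwise distinct. -/
lemma lz_nodup {α : Type*} {T : List α} {F : List (List α)} (h : IsLZ78 T F) :
    F.dropLast.Nodup := by
  rw [List.nodup_iff_injective_get]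
  intro a b hab
  have hdl : F.dropLast.length = F.length - 1 := List.length_dropLast
  have ha := a.2
  have hb := b.2
  by_contra hne
  have hne' : a.1 ≠ b.1 := fun hh => hne (Fin.ext hh)
  simp only [List.get_eq_getElem, List.getElem_dropLast] at hab
  rcases Nat.lt_or_ge a.1 b.1 with hlt | hge
  · exact lz_key h hlt (by omega) hab.symm
  · exact lz_key h (by omega : b.1 < a.1) (by omega) hab

lemma lz_dropLast_drop {α : Type*} (l : List (List α)) (n : ℕ) :
    l.dropLast.drop n = (l.drop n).dropLast := by
  rw [List.dropLast_eq_take, List.dropLast_eq_take, List.drop_take, List.length_drop]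
  congr 1
  omega

lemma lz_len_split {α : Type*} (p : α → Prop) [DecidablePred p] (l : List α) :
    l.length = (l.filter (fun a => p a)).length + (l.filter (fun a => ¬ p a)).length := by
  induction l with
  | nil => simp
  | cons a t ih =>
    by_cases h : p a <;> simp [List.filter_cons, h, ih] <;> omega

lemma lz_mul_le_sum {l : List ℕ} {b : ℕ} (h : ∀ x ∈ l, b ≤ x) : l.length * b ≤ l.sum := by
  induction l with
  | nil => simp
  | cons a t ih =>
    simp only [List.length_cons, List.sum_cons]
    have h1 := ih (fun x hx => h x (List.mem_cons_of_mem _ hx))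
    have h2 := h a (List.mem_cons_self)
    calc (t.length + 1) * b = t.length * b + b := by ring
    _ ≤ t.sum + a := by omega
    _ = a + t.sum := by omega

/-- Counting: a duplicate-free list of strings over `Fin σ` contains at most
`(L+1)·σ^L` strings of length at most `L`. -/
lemma lz_count_short {σ L : ℕ} (hσ : 0 < σ) (G : List (List (Fin σ))) (hnd : G.Nodup) :
    (G.filter (fun w => w.length ≤ L)).length ≤ (L + 1) * σ ^ L := by
  classical
  set H := G.filter (fun w => w.length ≤ L) with hH
  have hndH : H.Nodup := hnd.filter _
  have hlen : ∀ w ∈ H, w.length ≤ L := by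
    intro w hw
    have := List.of_mem_filter hw
    simpa using this
  let f : List (Fin σ) → List.Vector (Fin σ) L × Fin (L + 1) :=
    fun w => (⟨(w ++ List.replicate L (⟨0, hσ⟩ : Fin σ)).take L, by
        simp [List.length_take]⟩, ⟨min w.length L, by omega⟩)
  have hkey : ∀ w : List (Fin σ), w.length ≤ L →
      ((w ++ List.replicate L (⟨0, hσ⟩ : Fin σ)).take L).take w.length = w := by
    intro w hw
    rw [List.take_take, min_eq_left hw, List.take_append_of_le_length (le_refl _),
      List.take_length]
  have hinj : ∀ w₁ ∈ H, ∀ w₂ ∈ H, f w₁ = f w₂ → w₁ = w₂ := by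
    intro w₁ h1 w₂ h2 hf
    have l1 := hlen w₁ h1
    have l2 := hlen w₂ h2
    have hlen12 : w₁.length = w₂.length := by
      have := congrArg (fun p : List.Vector (Fin σ) L × Fin (L + 1) => (p.2 : ℕ)) hf
      simpa [f, min_eq_left l1, min_eq_left l2] using this
    have hval : (w₁ ++ List.replicate L (⟨0, hσ⟩ : Fin σ)).take L
        = (w₂ ++ List.replicate L (⟨0, hσ⟩ : Fin σ)).take L := by
      have := congrArg
        (fun p : List.Vector (Fin σ) L × Fin (L + 1) => (p.1.val : List (Fin σ))) hf
      simpa [f] using this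
    have h3 := congrArg (fun l : List (Fin σ) => l.take w₁.length) hval
    rw [hkey w₁ l1, hlen12, hkey w₂ l2] at h3
    exact h3
  have hmapnd : (H.map f).Nodup := hndH.map_on hinj
  have := hmapnd.length_le_card
  simpa [Nat.mul_comm] using this

set_option maxHeartbeats 1000000 in
/-- If `z'` of the `z` LZ78 factors cover the first `n − r` characters, then the number
of remaining factors satisfies `z − z' ≤ c·r / log_σ r` for an absolute constant
`c > 0` (for `r ≥ σ`). -/
theorem lz78_remaining_factors_bound :
    ∃ c : ℝ, 0 < c ∧
      ∀ (σ : ℕ), 2 ≤ σ →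
        ∀ (T : List (Fin σ)) (F : List (List (Fin σ))), IsLZ78 T F →
          ∀ (z' r : ℕ), z' ≤ F.length →
            (F.take z').flatten.length = T.length - r →
            σ ≤ r →
            ((F.length - z' : ℕ) : ℝ) ≤ c * r / Real.logb σ r := by
  classical
  refine ⟨100, by norm_num, ?_⟩
  intro σ h2 T F hF z' r hz' hcov hσr
  -- basic numeric facts
  have hσ1 : (1:ℝ) < (σ:ℝ) := by exact_mod_cast h2.trans_lt' one_lt_two
  have hσrR : (σ:ℝ) ≤ (r:ℝ) := by exact_mod_cast hσr
  have hr1 : (1:ℝ) ≤ (r:ℝ) := le_trans hσ1.le hσrR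
  have hrn : 0 < r := by omega
  have hr0 : (0:ℝ) < (r:ℝ) := by exact_mod_cast hrn
  set ℓ : ℝ := Real.logb σ r with hℓdef
  have hℓ1 : 1 ≤ ℓ := by
    rw [hℓdef, Real.le_logb_iff_rpow_le hσ1 hr0]
    simpa using hσrR
  have hℓpos : 0 < ℓ := by linarith
  -- the remaining factors, last removed
  set G : List (List (Fin σ)) := (F.drop z').dropLast with hGdef
  have hGnodup : G.Nodup := by
    rw [hGdef, ← lz_dropLast_drop]
    exact (lz_nodup hF).sublist (List.drop_sublist _ _)
  -- total length of remaining factors is at most r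
  have hsplit : (F.take z').flatten.length + (F.drop z').flatten.length = T.length := by
    rw [← List.length_append, ← List.flatten_append, List.take_append_drop, hF.1]
  have hdropr : (F.drop z').flatten.length ≤ r := by omega
  have hGsum : (G.map List.length).sum ≤ r := by
    have hsub : List.Sublist (G.map List.length) ((F.drop z').map List.length) :=
      (List.dropLast_sublist _).map _
    have h3 := hsub.sum_le_sum (fun a _ => Nat.zero_le a)
    have h4 : ((F.drop z').map List.length).sum ≤ r := by
      rw [← List.length_flatten]; exact hdropr
    exact le_trans h3 h4
  -- the length parameter
  set L : ℕ := ⌊ℓ / 2⌋₊ with hLdef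
  have hLle : (L:ℝ) ≤ ℓ / 2 := Nat.floor_le (by positivity)
  have hLgt : ℓ / 2 < (L:ℝ) + 1 := Nat.lt_floor_add_one _
  -- short and long factors
  set A : ℕ := (G.filter (fun w => w.length ≤ L)).length with hAdef
  set B : ℕ := (G.filter (fun w => ¬ (w.length ≤ L))).length with hBdef
  have hAB : G.length ≤ A + B := by
    rw [hAdef, hBdef, ← lz_len_split (fun w : List (Fin σ) => w.length ≤ L) G]
  have hA : A ≤ (L + 1) * σ ^ L := lz_count_short (by omega) G hGnodup
  have hB : B * (L + 1) ≤ r := by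
    have hlong : ∀ x ∈ (G.filter (fun w => ¬ (w.length ≤ L))).map List.length, L + 1 ≤ x := by
      intro x hx
      obtain ⟨w, hw, rfl⟩ := List.mem_map.1 hx
      have := List.of_mem_filter hw
      simp at this
      omega
    have h1 := lz_mul_le_sum hlong
    rw [List.length_map] at h1
    have hsub : List.Sublist ((G.filter (fun w => ¬ (w.length ≤ L))).map List.length)
        (G.map List.length) :=
      (List.filter_sublist).map _
    have h2 := hsub.sum_le_sum (fun a _ => Nat.zero_le a)
    rw [hBdef]
    omega
  -- count of remaining factors
  have hkAB : F.length - z' ≤ A + B + 1 := by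
    have hGlen : G.length = F.length - z' - 1 := by
      rw [hGdef, List.length_dropLast, List.length_drop]
    omega
  -- cast everything to ℝ
  have hA' : (A:ℝ) ≤ ((L:ℝ) + 1) * (σ:ℝ) ^ L := by exact_mod_cast hA
  have hB' : (B:ℝ) * ((L:ℝ) + 1) ≤ (r:ℝ) := by exact_mod_cast hB
  have hk' : ((F.length - z' : ℕ):ℝ) ≤ (A:ℝ) + (B:ℝ) + 1 := by exact_mod_cast hkAB
  -- rpow facts
  set q : ℝ := (r:ℝ) ^ ((1:ℝ)/4) with hqdef
  set s : ℝ := (r:ℝ) ^ ((1:ℝ)/2) with hsdef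
  have hq0 : 0 ≤ q := by rw [hqdef]; positivity
  have hs0 : 0 ≤ s := by rw [hsdef]; positivity
  have hqq : q * q = s := by
    rw [hqdef, hsdef, ← Real.rpow_add hr0]; norm_num
  have hss : s * s = (r:ℝ) := by
    rw [hsdef, ← Real.rpow_add hr0]; norm_num
  have hqr : q ≤ (r:ℝ) := by
    rw [hqdef]
    calc (r:ℝ) ^ ((1:ℝ)/4) ≤ (r:ℝ) ^ ((1:ℝ)) :=
      Real.rpow_le_rpow_of_exponent_le hr1 (by norm_num)
    _ = (r:ℝ) := Real.rpow_one _
  have hpow : (σ:ℝ) ^ L ≤ s := by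
    rw [hsdef]
    calc (σ:ℝ) ^ (L:ℕ) = (σ:ℝ) ^ ((L:ℕ):ℝ) := (Real.rpow_natCast _ _).symm
    _ ≤ (σ:ℝ) ^ (ℓ / 2) := Real.rpow_le_rpow_of_exponent_le hσ1.le hLle
    _ = ((σ:ℝ) ^ ℓ) ^ ((1:ℝ)/2) := by
        rw [← Real.rpow_mul (by positivity)]; ring_nf
    _ = (r:ℝ) ^ ((1:ℝ)/2) := by
        rw [hℓdef, Real.rpow_logb (by positivity) (by linarith) hr0]
  have hℓ6 : ℓ ≤ 6 * q := by
    have hlog : Real.log r ≤ (r:ℝ) ^ ((1:ℝ)/4) / ((1:ℝ)/4) :=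
      Real.log_le_rpow_div (by positivity) (by norm_num)
    have h2le : Real.log 2 ≤ Real.log σ := Real.log_le_log (by norm_num) (by exact_mod_cast h2)
    have hl2 : (0.6931471803 : ℝ) < Real.log 2 := Real.log_two_gt_d9
    have hlogr0 : 0 ≤ Real.log r := Real.log_nonneg hr1
    rw [hℓdef, Real.logb, div_le_iff₀ (by linarith)]
    rw [hqdef] at hq0 ⊢
    nlinarith [hq0]
  -- final arithmetic
  rw [le_div_iff₀ hℓpos]
  have hA2 : (A:ℝ) * ℓ ≤ 54 * (r:ℝ) := by
    have hL32 : (L:ℝ) + 1 ≤ 3/2 * ℓ := by linarith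
    have h1 : (A:ℝ) ≤ (3/2 * ℓ) * s :=
      le_trans hA' (mul_le_mul hL32 hpow (by positivity) (by linarith))
    have h2 : ℓ * ℓ ≤ 36 * s := by nlinarith [hℓ6, hqq, hq0, hℓpos]
    calc (A:ℝ) * ℓ ≤ (3/2 * ℓ) * s * ℓ :=
      mul_le_mul_of_nonneg_right h1 (by linarith)
    _ = 3/2 * s * (ℓ * ℓ) := by ring
    _ ≤ 3/2 * s * (36 * s) := by
        apply mul_le_mul_of_nonneg_left h2 (by linarith)
    _ = 54 * (s * s) := by ring
    _ = 54 * (r:ℝ) := by rw [hss]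
  have hB2 : (B:ℝ) * ℓ ≤ 2 * (r:ℝ) := by
    have hBpos : (0:ℝ) ≤ (B:ℝ) := Nat.cast_nonneg _
    nlinarith [hB', hLgt, hBpos]
  have hℓr : ℓ ≤ 6 * (r:ℝ) := by nlinarith [hℓ6, hqr]
  have hfinal := mul_le_mul_of_nonneg_right hk' hℓpos.le
  nlinarith [hfinal, hA2, hB2, hℓr]
end
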